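/- Let l be a Lie algebra over a field of characteristic zero and L, M ∈ l with N := [L,M], 2T := [L,N], and assume [M,N] = 0 and [L,T] = 0. Then in U(l), for all ℓ, m ∈ N: L^(ℓ) M^(m) = Σ_{s=0}^{min(ℓ,m)} M^(m-s) Σ_{t+q=s} T^(t) N^(q) L^(ℓ-2t-q), where X^(k) := X^k/k! (interpreted as 0 when k < 0). -/

import Mathlib

noncomputable section

/-- The divided power `x^(k) := x^k / k!` in a `K`-algebra. -/
def dividedPow (K : Type) [Field K] {A : Type} [Ring A] [Algebra K A] (x : A) (k : ℕ) : A :=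
  (k.factorial : K)⁻¹ • x ^ k

end

set_option linter.unusedSectionVars false
set_option maxHeartbeats 1000000

lemma shift_inner {B : Type*} [AddCommMonoid B] (g : ℕ → B) (n : ℕ) (h0 : g 0 = 0)
    (htop : g (n+1) = 0) :
    ∑ q ∈ Finset.range (n+1), g (q+1) = ∑ q ∈ Finset.range (n+1), g q := by
  have h1 := Finset.sum_range_succ' g (n+1)
  have h2 := Finset.sum_range_succ g (n+1)
  rw [h0, add_zero] at h1
  rw [htop, add_zero] at h2
  rw [← h1, h2]

lemma sum_extend {B : Type*} [AddCommMonoid B] (f : ℕ → ℕ → B) (m : ℕ)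
    (hf : ∀ t q, m < t + q → f t q = 0) :
    ∑ t ∈ Finset.range (m+1), ∑ q ∈ Finset.range (m+1), f t q
      = ∑ t ∈ Finset.range (m+2), ∑ q ∈ Finset.range (m+2), f t q := by
  have inner : ∀ t, ∑ q ∈ Finset.range (m+1), f t q = ∑ q ∈ Finset.range (m+2), f t q := by
    intro t
    rw [Finset.sum_range_succ (f t) (m+1), hf t (m+1) (by omega), add_zero]
  have last : ∑ q ∈ Finset.range (m+2), f (m+1) q = 0 :=
    Finset.sum_eq_zero (fun q _ => hf (m+1) q (by omega))
  rw [Finset.sum_range_succ (fun t => ∑ q ∈ Finset.range (m+2), f t q) (m+1), last, add_zero]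
  exact Finset.sum_congr rfl (fun t _ => inner t)


section DPAux
variable {K : Type} [Field K] [CharZero K] {A : Type} [Ring A] [Algebra K A]


lemma dp_zero (x : A) : dividedPow K x 0 = 1 := by simp [dividedPow]

lemma dp_mul_self (x : A) (k : ℕ) :
    dividedPow K x k * x = ((k+1 : ℕ) : K) • dividedPow K x (k+1) := by
  rw [dividedPow, dividedPow, smul_mul_assoc, ← pow_succ, smul_smul]
  congr 1
  rw [Nat.factorial_succ]
  have h : ((k:K)+1) ≠ 0 := Nat.cast_add_one_ne_zero k
  push_cast
  rw [mul_inv, ← mul_assoc, mul_inv_cancel₀ h, one_mul]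

lemma self_mul_dp (x : A) (k : ℕ) :
    x * dividedPow K x k = ((k+1 : ℕ) : K) • dividedPow K x (k+1) := by
  rw [← dp_mul_self, dividedPow, smul_mul_assoc, mul_smul_comm, ← pow_succ, ← pow_succ']

lemma dp_succ (x : A) (k : ℕ) :
    dividedPow K x (k+1) = (((k+1 : ℕ) : K))⁻¹ • (x * dividedPow K x k) := by
  rw [self_mul_dp, smul_smul, inv_mul_cancel₀ (by exact_mod_cast Nat.succ_ne_zero k), one_smul]

lemma commute_dp {x y : A} (h : Commute x y) (k : ℕ) : Commute x (dividedPow K y k) :=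
  (h.pow_right k).smul_right _



lemma keyN (a b c d : A) (h1 : a * b = b * a + c) (h2 : a * c = c * a + (2:K) • d)
    (h4 : a * d = d * a) (r : ℕ) :
    a ^ r * b = b * a ^ r + (r : K) • (c * a ^ (r-1))
      + ((r * (r-1) : ℕ) : K) • (d * a ^ (r-2)) := by
  induction r with
  | zero => simp
  | succ r ih =>
    have hsplit : a ^ (r+1) * b = a * (a ^ r * b) := by rw [← mul_assoc, ← pow_succ']
    rw [hsplit, ih, mul_add, mul_add, ← mul_assoc a b, h1, mul_smul_comm, mul_smul_comm,
      ← mul_assoc a c, h2]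
    rcases r with _ | _ | r
    · simp [pow_succ]
    · simp only [Nat.reduceSub, Nat.reduceAdd, Nat.reduceMul, Nat.cast_one, one_smul,
        Nat.cast_zero, zero_smul, add_zero, pow_zero, pow_one, mul_one, add_mul]
      rw [mul_assoc b a, ← pow_two]
      match_scalars <;> push_cast <;> ring
    · rw [show r+2-1 = r+1 from rfl, show r+2-2 = r from rfl,
        show r+2+1-1 = r+2 from rfl, show r+2+1-2 = r+1 from rfl]
      have e : a * (d * a ^ r) = d * a ^ (r+1) := by
        rw [← mul_assoc, h4, mul_assoc, ← pow_succ']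
      rw [e]
      simp only [add_mul, smul_mul_assoc, mul_assoc, ← pow_succ']
      match_scalars <;> push_cast <;> ring


lemma key (a b c d : A) (h1 : a * b = b * a + c) (h2 : a * c = c * a + (2:K) • d)
    (h4 : a * d = d * a) (r : ℕ) :
    dividedPow K a r * b
      = b * dividedPow K a r + (if 1 ≤ r then c * dividedPow K a (r-1) else 0)
        + (if 2 ≤ r then d * dividedPow K a (r-2) else 0) := by
  have hf : ∀ n : ℕ, ((n.factorial : K)) ≠ 0 := fun n => Nat.cast_ne_zero.mpr n.factorial_ne_zero
  rcases r with _ | _ | r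
  · simp [dividedPow, h1]
  · simp only [show ¬(2:ℕ) ≤ 1 by norm_num, if_false, add_zero, show (1:ℕ) ≤ 1 from le_rfl,
      if_true, Nat.sub_self, dividedPow]
    rw [smul_mul_assoc, keyN a b c d h1 h2 h4 1]
    simp only [Nat.reduceSub, Nat.reduceMul, Nat.cast_one, one_smul, Nat.cast_zero, zero_smul,
      add_zero, mul_smul_comm]
    match_scalars <;> simp [Nat.factorial]
  · simp only [show (1:ℕ) ≤ r+2 by omega, show (2:ℕ) ≤ r+2 by omega, if_true]
    rw [show r+2-1 = r+1 from rfl, show r+2-2 = r from rfl]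
    simp only [dividedPow]
    rw [smul_mul_assoc, keyN a b c d h1 h2 h4 (r+2)]
    rw [show r+2-1 = r+1 from rfl, show r+2-2 = r from rfl]
    simp only [mul_smul_comm]
    match_scalars
    · push_cast; ring
    · rw [Nat.factorial_succ (r+1)]
      have h1' := hf (r+1)
      push_cast
      have h2' : ((r:K)+1+1) ≠ 0 := by
        have := Nat.cast_add_one_ne_zero (R := K) (r+1); push_cast at this; exact this
      field_simp
      ring
    · rw [Nat.factorial_succ (r+1), Nat.factorial_succ r]
      have h1' := hf r
      have h2' : ((r:K)+1+1) ≠ 0 := by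
        have := Nat.cast_add_one_ne_zero (R := K) (r+1); push_cast at this; exact this
      have h3' : ((r:K)+1) ≠ 0 := Nat.cast_add_one_ne_zero r
      push_cast
      field_simp
      ring_nf

lemma comm_left {x y : A} (h : x * y = y * x) (z : A) : x * (y * z) = y * (x * z) := by
  rw [← mul_assoc, h, mul_assoc]

lemma comm_dp {x y : A} (h : x * y = y * x) (k : ℕ) :
    x * dividedPow K y k = dividedPow K y k * x := by
  have : Commute x y := h
  exact ((this.pow_right k).smul_right _).eq

lemma term_mul (a b c d : A) (h1 : a * b = b * a + c) (h2 : a * c = c * a + (2:K) • d)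
    (h3 : b * c = c * b) (h4 : a * d = d * a) (h5 : b * d = d * b) (h6 : c * d = d * c)
    (ℓ m t q : ℕ) :
    (if t+q ≤ m ∧ 2*t+q ≤ ℓ then dividedPow K b (m-(t+q)) * dividedPow K d t
        * dividedPow K c q * dividedPow K a (ℓ-(2*t+q)) else 0) * b
    = (if t+q ≤ m ∧ 2*t+q ≤ ℓ then ((m-(t+q)+1 : ℕ) : K) •
          (dividedPow K b (m-(t+q)+1) * dividedPow K d t * dividedPow K c q
            * dividedPow K a (ℓ-(2*t+q))) else 0)
      + (if t+q ≤ m ∧ 2*t+q+1 ≤ ℓ then ((q+1 : ℕ) : K) •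
          (dividedPow K b (m-(t+q)) * dividedPow K d t * dividedPow K c (q+1)
            * dividedPow K a (ℓ-(2*t+(q+1)))) else 0)
      + (if t+q ≤ m ∧ 2*t+q+2 ≤ ℓ then ((t+1 : ℕ) : K) •
          (dividedPow K b (m-(t+q)) * dividedPow K d (t+1) * dividedPow K c q
            * dividedPow K a (ℓ-(2*(t+1)+q))) else 0) := by
  by_cases hc : t+q ≤ m ∧ 2*t+q ≤ ℓ
  · obtain ⟨hc1, hc2⟩ := hc
    rw [if_pos ⟨hc1, hc2⟩, if_pos ⟨hc1, hc2⟩]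
    rw [mul_assoc, key a b c d h1 h2 h4, mul_add, mul_add]
    have e1 : dividedPow K b (m-(t+q)) * dividedPow K d t * dividedPow K c q *
        (b * dividedPow K a (ℓ-(2*t+q)))
        = ((m-(t+q)+1 : ℕ) : K) • (dividedPow K b (m-(t+q)+1) * dividedPow K d t
            * dividedPow K c q * dividedPow K a (ℓ-(2*t+q))) := by
      simp only [mul_assoc]
      rw [comm_left (comm_dp h3 q).symm, comm_left (comm_dp h5 t).symm,
        ← mul_assoc (dividedPow K b (m-(t+q))) b, dp_mul_self, smul_mul_assoc]
    have e2 : dividedPow K b (m-(t+q)) * dividedPow K d t * dividedPow K c q *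
        (if 1 ≤ ℓ-(2*t+q) then c * dividedPow K a (ℓ-(2*t+q)-1) else 0)
        = (if t+q ≤ m ∧ 2*t+q+1 ≤ ℓ then ((q+1 : ℕ) : K) •
            (dividedPow K b (m-(t+q)) * dividedPow K d t * dividedPow K c (q+1)
              * dividedPow K a (ℓ-(2*t+(q+1)))) else 0) := by
      by_cases h : 2*t+q+1 ≤ ℓ
      · rw [if_pos (show 1 ≤ ℓ-(2*t+q) by omega), if_pos ⟨hc1, h⟩,
          show ℓ-(2*t+q)-1 = ℓ-(2*t+(q+1)) by omega]
        simp only [mul_assoc]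
        rw [← mul_assoc (dividedPow K c q) c, dp_mul_self, smul_mul_assoc]
        simp only [mul_smul_comm]
      · rw [if_neg (show ¬ 1 ≤ ℓ-(2*t+q) by omega), if_neg (by omega), mul_zero]
    have e3 : dividedPow K b (m-(t+q)) * dividedPow K d t * dividedPow K c q *
        (if 2 ≤ ℓ-(2*t+q) then d * dividedPow K a (ℓ-(2*t+q)-2) else 0)
        = (if t+q ≤ m ∧ 2*t+q+2 ≤ ℓ then ((t+1 : ℕ) : K) •
            (dividedPow K b (m-(t+q)) * dividedPow K d (t+1) * dividedPow K c q
              * dividedPow K a (ℓ-(2*(t+1)+q))) else 0) := by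
      by_cases h : 2*t+q+2 ≤ ℓ
      · rw [if_pos (show 2 ≤ ℓ-(2*t+q) by omega), if_pos ⟨hc1, h⟩,
          show ℓ-(2*t+q)-2 = ℓ-(2*(t+1)+q) by omega]
        simp only [mul_assoc]
        rw [comm_left (comm_dp h6.symm q).symm,
          ← mul_assoc (dividedPow K d t) d, dp_mul_self, smul_mul_assoc]
        simp only [mul_smul_comm]
      · rw [if_neg (show ¬ 2 ≤ ℓ-(2*t+q) by omega), if_neg (by omega), mul_zero]
    rw [e1, e2, e3]
  · rw [if_neg hc, if_neg hc, if_neg (by omega), if_neg (by omega), zero_mul]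
    simp

lemma master (a b c d : A) (h1 : a * b = b * a + c) (h2 : a * c = c * a + (2:K) • d)
    (h3 : b * c = c * b) (h4 : a * d = d * a) (h5 : b * d = d * b) (h6 : c * d = d * c)
    (ℓ m : ℕ) :
    dividedPow K a ℓ * dividedPow K b m
      = ∑ t ∈ Finset.range (m+1), ∑ q ∈ Finset.range (m+1),
          (if t+q ≤ m ∧ 2*t+q ≤ ℓ then dividedPow K b (m-(t+q)) * dividedPow K d t
            * dividedPow K c q * dividedPow K a (ℓ-(2*t+q)) else 0) := by
  induction m with
  | zero => simp [dp_zero]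
  | succ m ih =>
    have hm1 : ((m+1:ℕ):K) ≠ 0 := Nat.cast_ne_zero.mpr (Nat.succ_ne_zero m)
    have hstep : dividedPow K b (m+1) = ((m+1:ℕ):K)⁻¹ • (dividedPow K b m * b) := by
      rw [dp_mul_self, smul_smul, inv_mul_cancel₀ hm1, one_smul]
    rw [hstep, mul_smul_comm, ← mul_assoc, ih, Finset.sum_mul]
    simp only [Finset.sum_mul]
    simp only [term_mul a b c d h1 h2 h3 h4 h5 h6 ℓ m]
    simp only [Finset.sum_add_distrib]
    -- abbreviations
    have E1 : ∑ t ∈ Finset.range (m+1), ∑ q ∈ Finset.range (m+1),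
          (if t+q ≤ m ∧ 2*t+q ≤ ℓ then ((m-(t+q)+1 : ℕ) : K) •
            (dividedPow K b (m-(t+q)+1) * dividedPow K d t * dividedPow K c q
              * dividedPow K a (ℓ-(2*t+q))) else 0)
        = ∑ t ∈ Finset.range (m+2), ∑ q ∈ Finset.range (m+2),
          (if t+q ≤ m+1 ∧ 2*t+q ≤ ℓ then ((m+1-(t+q) : ℕ) : K) •
            (dividedPow K b (m+1-(t+q)) * dividedPow K d t * dividedPow K c q
              * dividedPow K a (ℓ-(2*t+q))) else 0) := by
      rw [sum_extend _ m (fun t q h => by rw [if_neg (by omega)])]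
      refine Finset.sum_congr rfl (fun t _ => Finset.sum_congr rfl (fun q _ => ?_))
      by_cases hc : t+q ≤ m ∧ 2*t+q ≤ ℓ
      · rw [if_pos hc, if_pos (by omega : t+q ≤ m+1 ∧ 2*t+q ≤ ℓ),
          show m-(t+q)+1 = m+1-(t+q) by omega]
      · by_cases hg : t+q ≤ m+1 ∧ 2*t+q ≤ ℓ
        · rw [if_neg hc, if_pos hg, show m+1-(t+q) = 0 by omega, Nat.cast_zero, zero_smul]
        · rw [if_neg hc, if_neg hg]
    have E2 : ∑ t ∈ Finset.range (m+1), ∑ q ∈ Finset.range (m+1),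
          (if t+q ≤ m ∧ 2*t+q+1 ≤ ℓ then ((q+1 : ℕ) : K) •
            (dividedPow K b (m-(t+q)) * dividedPow K d t * dividedPow K c (q+1)
              * dividedPow K a (ℓ-(2*t+(q+1)))) else 0)
        = ∑ t ∈ Finset.range (m+2), ∑ q ∈ Finset.range (m+2),
          (if t+q ≤ m+1 ∧ 2*t+q ≤ ℓ ∧ 1 ≤ q then ((q : ℕ) : K) •
            (dividedPow K b (m+1-(t+q)) * dividedPow K d t * dividedPow K c q
              * dividedPow K a (ℓ-(2*t+q))) else 0) := by
      rw [sum_extend _ m (fun t q h => by rw [if_neg (by omega)])]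
      refine Finset.sum_congr rfl (fun t _ => ?_)
      have T2 : ∀ q : ℕ, (if t+q ≤ m ∧ 2*t+q+1 ≤ ℓ then ((q+1 : ℕ) : K) •
            (dividedPow K b (m-(t+q)) * dividedPow K d t * dividedPow K c (q+1)
              * dividedPow K a (ℓ-(2*t+(q+1)))) else 0)
          = (fun q' => if t+q' ≤ m+1 ∧ 2*t+q' ≤ ℓ ∧ 1 ≤ q' then ((q' : ℕ) : K) •
            (dividedPow K b (m+1-(t+q')) * dividedPow K d t * dividedPow K c q'
              * dividedPow K a (ℓ-(2*t+q'))) else 0) (q+1) := by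
        intro q
        beta_reduce
        by_cases hc : t+q ≤ m ∧ 2*t+q+1 ≤ ℓ
        · rw [if_pos hc, if_pos (by omega : t+(q+1) ≤ m+1 ∧ 2*t+(q+1) ≤ ℓ ∧ 1 ≤ q+1),
            show m+1-(t+(q+1)) = m-(t+q) by omega]
        · rw [if_neg hc, if_neg (by omega)]
      rw [Finset.sum_congr rfl (fun q _ => T2 q)]
      exact shift_inner (fun q' => if t+q' ≤ m+1 ∧ 2*t+q' ≤ ℓ ∧ 1 ≤ q' then ((q' : ℕ) : K) •
            (dividedPow K b (m+1-(t+q')) * dividedPow K d t * dividedPow K c q'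
              * dividedPow K a (ℓ-(2*t+q'))) else 0) (m+1)
        (by beta_reduce; rw [if_neg (by omega)]) (by beta_reduce; rw [if_neg (by omega)])
    have E3 : ∑ t ∈ Finset.range (m+1), ∑ q ∈ Finset.range (m+1),
          (if t+q ≤ m ∧ 2*t+q+2 ≤ ℓ then ((t+1 : ℕ) : K) •
            (dividedPow K b (m-(t+q)) * dividedPow K d (t+1) * dividedPow K c q
              * dividedPow K a (ℓ-(2*(t+1)+q))) else 0)
        = ∑ t ∈ Finset.range (m+2), ∑ q ∈ Finset.range (m+2),
          (if t+q ≤ m+1 ∧ 2*t+q ≤ ℓ ∧ 1 ≤ t then ((t : ℕ) : K) •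
            (dividedPow K b (m+1-(t+q)) * dividedPow K d t * dividedPow K c q
              * dividedPow K a (ℓ-(2*t+q))) else 0) := by
      rw [sum_extend _ m (fun t q h => by rw [if_neg (by omega)])]
      have T3 : ∀ t q : ℕ, (if t+q ≤ m ∧ 2*t+q+2 ≤ ℓ then ((t+1 : ℕ) : K) •
            (dividedPow K b (m-(t+q)) * dividedPow K d (t+1) * dividedPow K c q
              * dividedPow K a (ℓ-(2*(t+1)+q))) else 0)
          = (fun t' => if t'+q ≤ m+1 ∧ 2*t'+q ≤ ℓ ∧ 1 ≤ t' then ((t' : ℕ) : K) •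
            (dividedPow K b (m+1-(t'+q)) * dividedPow K d t' * dividedPow K c q
              * dividedPow K a (ℓ-(2*t'+q))) else 0) (t+1) := by
        intro t q
        beta_reduce
        by_cases hc : t+q ≤ m ∧ 2*t+q+2 ≤ ℓ
        · rw [if_pos hc, if_pos (by omega : (t+1)+q ≤ m+1 ∧ 2*(t+1)+q ≤ ℓ ∧ 1 ≤ t+1),
            show m+1-(t+1+q) = m-(t+q) by omega]
        · rw [if_neg hc, if_neg (by omega)]
      rw [Finset.sum_congr rfl (fun t _ => Finset.sum_congr rfl (fun q _ => T3 t q))]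
      exact shift_inner (fun t' => ∑ q ∈ Finset.range (m+2),
          if t'+q ≤ m+1 ∧ 2*t'+q ≤ ℓ ∧ 1 ≤ t' then ((t' : ℕ) : K) •
            (dividedPow K b (m+1-(t'+q)) * dividedPow K d t' * dividedPow K c q
              * dividedPow K a (ℓ-(2*t'+q))) else 0) (m+1)
        (Finset.sum_eq_zero (fun q _ => by rw [if_neg (by omega)]))
        (Finset.sum_eq_zero (fun q _ => by rw [if_neg (by omega)]))
    rw [E1, E2, E3, ← Finset.sum_add_distrib, ← Finset.sum_add_distrib]
    simp only [← Finset.sum_add_distrib]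
    have comb : ∀ t q : ℕ,
        (if t+q ≤ m+1 ∧ 2*t+q ≤ ℓ then ((m+1-(t+q) : ℕ) : K) •
            (dividedPow K b (m+1-(t+q)) * dividedPow K d t * dividedPow K c q
              * dividedPow K a (ℓ-(2*t+q))) else 0)
        + (if t+q ≤ m+1 ∧ 2*t+q ≤ ℓ ∧ 1 ≤ q then ((q : ℕ) : K) •
            (dividedPow K b (m+1-(t+q)) * dividedPow K d t * dividedPow K c q
              * dividedPow K a (ℓ-(2*t+q))) else 0)
        + (if t+q ≤ m+1 ∧ 2*t+q ≤ ℓ ∧ 1 ≤ t then ((t : ℕ) : K) •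
            (dividedPow K b (m+1-(t+q)) * dividedPow K d t * dividedPow K c q
              * dividedPow K a (ℓ-(2*t+q))) else 0)
        = ((m+1 : ℕ) : K) • (if t+q ≤ m+1 ∧ 2*t+q ≤ ℓ then
            dividedPow K b (m+1-(t+q)) * dividedPow K d t * dividedPow K c q
              * dividedPow K a (ℓ-(2*t+q)) else 0) := by
      intro t q
      by_cases hg : t+q ≤ m+1 ∧ 2*t+q ≤ ℓ
      · rw [if_pos hg, if_pos hg]
        by_cases hq : 1 ≤ q
        · rw [if_pos ⟨hg.1, hg.2, hq⟩]
          by_cases ht : 1 ≤ t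
          · rw [if_pos ⟨hg.1, hg.2, ht⟩, ← add_smul, ← add_smul]
            congr 1
            have := hg.1
            push_cast [Nat.cast_sub hg.1]
            ring
          · have ht0 : t = 0 := by omega
            subst ht0
            rw [if_neg (by omega), add_zero, ← add_smul]
            congr 1
            push_cast [Nat.cast_sub hg.1]
            ring
        · have hq0 : q = 0 := by omega
          subst hq0
          rw [if_neg (by omega), add_zero]
          by_cases ht : 1 ≤ t
          · rw [if_pos ⟨hg.1, hg.2, ht⟩, ← add_smul]
            congr 1
            push_cast [Nat.cast_sub hg.1]
            ring
          · have ht0 : t = 0 := by omega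
            subst ht0
            rw [if_neg (by omega), add_zero]
            congr 1
      · rw [if_neg hg, if_neg (by omega), if_neg (by omega), if_neg hg, smul_zero]
        simp
    rw [Finset.sum_congr rfl (fun t _ => Finset.sum_congr rfl (fun q _ => comb t q))]
    simp only [← Finset.smul_sum]
    rw [smul_smul, inv_mul_cancel₀ hm1, one_smul]

lemma convert (a b c d : A) (ℓ m : ℕ) :
    ∑ t ∈ Finset.range (m+1), ∑ q ∈ Finset.range (m+1),
        (if t+q ≤ m ∧ 2*t+q ≤ ℓ then dividedPow K b (m-(t+q)) * dividedPow K d t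
          * dividedPow K c q * dividedPow K a (ℓ-(2*t+q)) else 0)
      = ∑ s ∈ Finset.range (min ℓ m + 1), dividedPow K b (m - s)
          * ∑ p ∈ Finset.HasAntidiagonal.antidiagonal s, dividedPow K d p.1 * dividedPow K c p.2
            * (if 2*p.1+p.2 ≤ ℓ then dividedPow K a (ℓ-(2*p.1+p.2)) else 0) := by
  set F : ℕ × ℕ → A := fun p => if p.1+p.2 ≤ m ∧ 2*p.1+p.2 ≤ ℓ then
    dividedPow K b (m-(p.1+p.2)) * dividedPow K d p.1
      * dividedPow K c p.2 * dividedPow K a (ℓ-(2*p.1+p.2)) else 0 with hF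
  have e0 : ∑ t ∈ Finset.range (m+1), ∑ q ∈ Finset.range (m+1),
      (if t+q ≤ m ∧ 2*t+q ≤ ℓ then dividedPow K b (m-(t+q)) * dividedPow K d t
        * dividedPow K c q * dividedPow K a (ℓ-(2*t+q)) else 0)
      = ∑ p ∈ (Finset.range (m+1)) ×ˢ (Finset.range (m+1)), F p := by
    rw [Finset.sum_product]
  rw [e0]
  have e1 : ∑ p ∈ (Finset.range (m+1)) ×ˢ (Finset.range (m+1)), F p
      = ∑ p ∈ ((Finset.range (m+1)) ×ˢ (Finset.range (m+1))).filter
          (fun p => p.1 + p.2 ≤ m), F p := by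
    refine (Finset.sum_subset (Finset.filter_subset _ _) ?_).symm
    intro p hp hnp
    have : ¬ (p.1 + p.2 ≤ m) := by
      intro h
      exact hnp (Finset.mem_filter.mpr ⟨hp, h⟩)
    rw [hF]
    exact if_neg (by omega)
  rw [e1]
  have e2 : ((Finset.range (m+1)) ×ˢ (Finset.range (m+1))).filter (fun p => p.1 + p.2 ≤ m)
      = (Finset.range (m+1)).biUnion (fun s => Finset.HasAntidiagonal.antidiagonal s) := by
    ext p
    simp only [Finset.mem_filter, Finset.mem_product, Finset.mem_range, Finset.mem_biUnion,
      Finset.HasAntidiagonal.mem_antidiagonal]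
    constructor
    · rintro ⟨⟨h1, h2⟩, h3⟩
      exact ⟨p.1 + p.2, by omega, rfl⟩
    · rintro ⟨s, hs, hsum⟩
      omega
  rw [e2, Finset.sum_biUnion (by
    intro x _ y _ hxy
    refine Finset.disjoint_left.mpr (fun p hp hq => hxy ?_)
    rw [← Finset.HasAntidiagonal.mem_antidiagonal.mp hp, ← Finset.HasAntidiagonal.mem_antidiagonal.mp hq])]
  have e4 : ∑ s ∈ Finset.range (m+1), ∑ p ∈ Finset.HasAntidiagonal.antidiagonal s, F p
      = ∑ s ∈ Finset.range (min ℓ m + 1), ∑ p ∈ Finset.HasAntidiagonal.antidiagonal s, F p := by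
    refine (Finset.sum_subset (Finset.range_subset_range.mpr (by omega)) ?_).symm
    intro s hs hns
    refine Finset.sum_eq_zero (fun p hp => ?_)
    have hps := Finset.HasAntidiagonal.mem_antidiagonal.mp hp
    have hs1 : s < m + 1 := Finset.mem_range.mp hs
    have hs2 : ¬ (s < min ℓ m + 1) := fun h => hns (Finset.mem_range.mpr h)
    rw [hF]
    exact if_neg (by omega)
  rw [e4]
  refine Finset.sum_congr rfl (fun s hs => ?_)
  have hs1 : s < min ℓ m + 1 := Finset.mem_range.mp hs
  rw [Finset.mul_sum]
  refine Finset.sum_congr rfl (fun p hp => ?_)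
  have hps := Finset.HasAntidiagonal.mem_antidiagonal.mp hp
  by_cases h : 2*p.1+p.2 ≤ ℓ
  · rw [hF]
    beta_reduce
    rw [if_pos ⟨by omega, h⟩, if_pos h, hps]
    simp only [mul_assoc]
  · rw [hF]
    beta_reduce
    rw [if_neg (by omega), if_neg h, mul_zero, mul_zero]

end DPAux

/-- Let `l` be a Lie algebra over a field of characteristic zero and
`L, M ∈ l` with `N := [L,M]`, `2T := [L,N]`, `[M,N] = 0`, `[L,T] = 0`.  Then in `U(l)`,
for all `ℓ, m ∈ ℕ`:
`L^(ℓ) M^(m) = Σ_{s=0}^{min(ℓ,m)} M^(m-s) Σ_{t+q=s} T^(t) N^(q) L^(ℓ-2t-q)`,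
where `L^(k)` is interpreted as `0` when `k < 0` (i.e. when `2t + q > ℓ`). -/
theorem dividedPow_cubic_commutation
    (K : Type) [Field K] [CharZero K] (𝔩 : Type) [LieRing 𝔩] [LieAlgebra K 𝔩]
    (L M N T : 𝔩) (hN : ⁅L, M⁆ = N) (hT : ⁅L, N⁆ = (2 : K) • T)
    (hMN : ⁅M, N⁆ = 0) (hLT : ⁅L, T⁆ = 0)
    (ℓ m : ℕ) :
    dividedPow K (UniversalEnvelopingAlgebra.ι K L) ℓ
        * dividedPow K (UniversalEnvelopingAlgebra.ι K M) m
      = ∑ s ∈ Finset.range (min ℓ m + 1),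
          dividedPow K (UniversalEnvelopingAlgebra.ι K M) (m - s)
            * ∑ p ∈ Finset.HasAntidiagonal.antidiagonal s,
                dividedPow K (UniversalEnvelopingAlgebra.ι K T) p.1
                  * dividedPow K (UniversalEnvelopingAlgebra.ι K N) p.2
                  * (if 2 * p.1 + p.2 ≤ ℓ then
                      dividedPow K (UniversalEnvelopingAlgebra.ι K L) (ℓ - (2 * p.1 + p.2))
                    else 0) := by
  have hMT : ⁅M, T⁆ = (0 : 𝔩) := by
    have jac := lie_lie L M N
    rw [hN, lie_self, hMN, lie_zero, hT, lie_smul, zero_sub, eq_comm, neg_eq_zero] at jac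
    exact (smul_eq_zero.mp jac).resolve_left (two_ne_zero)
  have hNT : ⁅N, T⁆ = (0 : 𝔩) := by
    have jac := lie_lie L M T
    rw [hN, hMT, lie_zero, hLT, lie_zero, zero_sub, neg_zero] at jac
    exact jac
  set a := UniversalEnvelopingAlgebra.ι K L with ha
  set b := UniversalEnvelopingAlgebra.ι K M with hb
  set c := UniversalEnvelopingAlgebra.ι K N with hc
  set d := UniversalEnvelopingAlgebra.ι K T with hd
  have hbr : ∀ x y : 𝔩, UniversalEnvelopingAlgebra.ι K x * UniversalEnvelopingAlgebra.ι K y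
      - UniversalEnvelopingAlgebra.ι K y * UniversalEnvelopingAlgebra.ι K x
      = UniversalEnvelopingAlgebra.ι K ⁅x, y⁆ := by
    intro x y
    letI := LieRing.ofAssociativeRing (A := UniversalEnvelopingAlgebra K 𝔩)
    rw [LieHom.map_lie, Ring.lie_def]
  have h1 : a * b = b * a + c := by
    have h := hbr L M
    rw [hN] at h
    rw [← ha, ← hb, ← hc] at h
    rw [← h]
    abel
  have h2 : a * c = c * a + (2 : K) • d := by
    have h := hbr L N
    rw [hT, map_smul] at h
    rw [← ha, ← hc, ← hd] at h
    rw [← h]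
    abel
  have h3 : b * c = c * b := by
    have h := hbr M N
    rw [hMN, map_zero] at h
    rw [← hb, ← hc] at h
    exact sub_eq_zero.mp h
  have h4 : a * d = d * a := by
    have h := hbr L T
    rw [hLT, map_zero] at h
    rw [← ha, ← hd] at h
    exact sub_eq_zero.mp h
  have h5 : b * d = d * b := by
    have h := hbr M T
    rw [hMT, map_zero] at h
    rw [← hb, ← hd] at h
    exact sub_eq_zero.mp h
  have h6 : c * d = d * c := by
    have h := hbr N T
    rw [hNT, map_zero] at h
    rw [← hc, ← hd] at h
    exact sub_eq_zero.mp h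
  rw [master a b c d h1 h2 h3 h4 h5 h6 ℓ m, convert a b c d ℓ m]
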